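/- If H is obtained from a simple graph G by contracting an edge {x,y}, and {p,q,r} is an asteroidal triple in H, then any path between p and q in H − N_H[r] lifts to a path between p and q in G avoiding N_G[r] (when r is not the contracted vertex) or avoiding both N_G[x] and N_G[y] (when r is the contracted vertex). -/

import Mathlib

open SimpleGraph

/-- The closed neighborhood of a vertex. -/
def closedNbh {V : Type*} (G : SimpleGraph V) (v : V) : Set V :=
  insert v (G.neighborSet v)

/-- `u` and `w` are joined by a walk all of whose vertices avoid the set `A`. -/
def reachAvoid {V : Type*} (G : SimpleGraph V) (A : Set V) (u w : V) : Prop :=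
  ∃ p : G.Walk u w, ∀ x ∈ p.support, x ∉ A

/-- `{p, q, r}` is an asteroidal triple: three pairwise nonadjacent (distinct) vertices
such that every two of them are joined by a path avoiding the closed neighborhood
of the third. -/
def IsAT {V : Type*} (G : SimpleGraph V) (p q r : V) : Prop :=
  p ≠ q ∧ p ≠ r ∧ q ≠ r ∧ ¬ G.Adj p q ∧ ¬ G.Adj p r ∧ ¬ G.Adj q r ∧
  reachAvoid G (closedNbh G r) p q ∧ reachAvoid G (closedNbh G q) p r ∧
  reachAvoid G (closedNbh G p) q r

/-- `C` is a block at `v`: a connected component of `G − N[v]`. -/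
def IsBlockAt {V : Type*} (G : SimpleGraph V) (v : V) (C : Set V) : Prop :=
  C.Nonempty ∧ C ⊆ (closedNbh G v)ᶜ ∧ (G.induce C).Connected ∧
  ∀ u ∉ C, u ∉ closedNbh G v → ∀ c ∈ C, ¬ G.Adj u c

/-- `z` is between the nonadjacent vertices `x` and `y`: `z` and `x` lie in a common
component of `G − N[y]`, and `z` and `y` lie in a common component of `G − N[x]`. -/
def Between {V : Type*} (G : SimpleGraph V) (x y z : V) : Prop :=
  reachAvoid G (closedNbh G y) x z ∧ reachAvoid G (closedNbh G x) y z

/-- The interval between `x` and `y`: all vertices between `x` and `y`. -/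
def interval {V : Type*} (G : SimpleGraph V) (x y : V) : Set V :=
  {z | Between G x y z}

/-- The contraction of the edge `{x, y}` of `G`: the vertices `x` and `y` are
replaced by a single new vertex `none`, whose neighborhood is
`(N(x) ∪ N(y)) \ {x, y}`. -/
def contractEdge {V : Type*} (G : SimpleGraph V) (x y : V) :
    SimpleGraph (Option {v : V // v ≠ x ∧ v ≠ y}) where
  Adj a b :=
    match a, b with
    | some u, some w => G.Adj u.1 w.1
    | some u, none => G.Adj u.1 x ∨ G.Adj u.1 y
    | none, some w => G.Adj w.1 x ∨ G.Adj w.1 y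
    | none, none => False
  symm := ⟨by
    rintro (_ | a) (_ | b) h <;> simp_all [SimpleGraph.adj_comm]⟩
  loopless := ⟨by
    rintro (_ | a) h <;> simp_all⟩

/-- The vertex `v` of `G` corresponds to the vertex `a` of the contracted graph:
either `a` is the copy of `v`, or `a` is the contracted vertex and `v ∈ {x, y}`. -/
def corr {V : Type*} (x y : V) (v : V) (a : Option {u : V // u ≠ x ∧ u ≠ y}) : Prop :=
  (∃ h : v ≠ x ∧ v ≠ y, a = some ⟨v, h⟩) ∨ (a = none ∧ (v = x ∨ v = y))

private lemma lift_walk_contract {V : Type*} (G : SimpleGraph V) (x y : V) (hxy : G.Adj x y)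
    {a b : Option {u : V // u ≠ x ∧ u ≠ y}} (w : (contractEdge G x y).Walk a b) :
    ∃ p : G.Walk (a.elim x Subtype.val) (b.elim x Subtype.val), ∀ v ∈ p.support,
      (∃ h : v ≠ x ∧ v ≠ y, some ⟨v, h⟩ ∈ w.support) ∨
      ((v = x ∨ v = y) ∧ (none ∈ w.support)) := by
  induction w with
  | nil =>
    rename_i a
    cases a with
    | none => exact ⟨.nil, by simp⟩
    | some u =>
      refine ⟨.nil, ?_⟩
      intro v hv
      simp only [Walk.support_nil, List.mem_singleton] at hv
      subst hv
      exact Or.inl ⟨u.2, by simp⟩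
  | cons h' w' ih =>
    rename_i a c b
    obtain ⟨p, hp⟩ := ih
    have weak : ∀ v, ((∃ h : v ≠ x ∧ v ≠ y, some ⟨v, h⟩ ∈ w'.support) ∨
        ((v = x ∨ v = y) ∧ (none ∈ w'.support))) →
        ((∃ h : v ≠ x ∧ v ≠ y, some ⟨v, h⟩ ∈ (Walk.cons h' w').support) ∨
        ((v = x ∨ v = y) ∧ (none ∈ (Walk.cons h' w').support))) := by
      intro v hv
      rcases hv with ⟨h, hm⟩ | ⟨h, hm⟩
      · exact Or.inl ⟨h, by simp [hm]⟩
      · exact Or.inr ⟨h, by simp [hm]⟩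
    cases a with
    | some u =>
      cases c with
      | some v =>
        have hadj : G.Adj u.1 v.1 := h'
        refine ⟨.cons hadj p, ?_⟩
        intro z hz
        change z ∈ _ :: _ at hz
        simp only [Walk.support_cons, List.mem_cons] at hz
        rcases hz with rfl | hz
        · exact Or.inl ⟨u.2, by simp⟩
        · exact weak z (hp z hz)
      | none =>
        have hadj : G.Adj u.1 x ∨ G.Adj u.1 y := h'
        rcases hadj with hux | huy
        · refine ⟨.cons hux p, ?_⟩
          intro z hz
          change z ∈ _ :: _ at hz
          simp only [Walk.support_cons, List.mem_cons] at hz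
          rcases hz with rfl | hz
          · exact Or.inl ⟨u.2, by simp⟩
          · exact weak z (hp z hz)
        · refine ⟨.cons huy (.cons hxy.symm p), ?_⟩
          intro z hz
          change z ∈ _ :: _ :: _ at hz
          simp only [Walk.support_cons, List.mem_cons] at hz
          rcases hz with rfl | rfl | hz
          · exact Or.inl ⟨u.2, by simp⟩
          · exact Or.inr ⟨Or.inr rfl, by simp⟩
          · exact weak z (hp z hz)
    | none =>
      cases c with
      | some v =>
        have hadj : G.Adj v.1 x ∨ G.Adj v.1 y := h'
        rcases hadj with hvx | hvy
        · refine ⟨.cons hvx.symm p, ?_⟩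
          intro z hz
          change z ∈ _ :: _ at hz
          simp only [Walk.support_cons, List.mem_cons] at hz
          rcases hz with rfl | hz
          · exact Or.inr ⟨Or.inl rfl, by simp⟩
          · exact weak z (hp z hz)
        · refine ⟨.cons hxy (.cons hvy.symm p), ?_⟩
          intro z hz
          change z ∈ _ :: _ :: _ at hz
          simp only [Walk.support_cons, List.mem_cons] at hz
          rcases hz with rfl | rfl | hz
          · exact Or.inr ⟨Or.inl rfl, by simp⟩
          · exact Or.inr ⟨Or.inr rfl, by simp⟩
          · exact weak z (hp z hz)
      | none => exact absurd h' (by simp [contractEdge])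

/-- paths of the contracted graph avoiding a closed neighborhood lift
back to paths of `G` avoiding the corresponding closed neighborhood(s). -/
theorem stmt2 {V : Type*} (G : SimpleGraph V) (x y : V) (hxy : G.Adj x y)
    (p q r : Option {u : V // u ≠ x ∧ u ≠ y})
    (hAT : IsAT (contractEdge G x y) p q r)
    (w : (contractEdge G x y).Walk p q)
    (hw : ∀ a ∈ w.support, a ∉ closedNbh (contractEdge G x y) r) :
    (∀ r' : {u : V // u ≠ x ∧ u ≠ y}, r = some r' →
      ∃ u v : V, corr x y u p ∧ corr x y v q ∧
        reachAvoid G (closedNbh G r'.1) u v) ∧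
    (r = none →
      ∃ (p' q' : {u : V // u ≠ x ∧ u ≠ y}), p = some p' ∧ q = some q' ∧
        reachAvoid G (closedNbh G x ∪ closedNbh G y) p'.1 q'.1) := by
  obtain ⟨pw, hpw⟩ := lift_walk_contract G x y hxy w
  constructor
  · rintro r' rfl
    refine ⟨p.elim x Subtype.val, q.elim x Subtype.val, ?_, ?_, pw, ?_⟩
    · cases p with
      | none => exact Or.inr ⟨rfl, Or.inl rfl⟩
      | some u => exact Or.inl ⟨u.2, by simp⟩
    · cases q with
      | none => exact Or.inr ⟨rfl, Or.inl rfl⟩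
      | some u => exact Or.inl ⟨u.2, by simp⟩
    · intro v hv
      rcases hpw v hv with ⟨h, hm⟩ | ⟨hvxy, hm⟩
      · have := hw _ hm
        simp only [closedNbh, contractEdge, Set.mem_insert_iff, mem_neighborSet,
          Option.some.injEq] at this ⊢
        push_neg at this ⊢
        constructor
        · intro hve
          exact this.1 (by apply Subtype.ext; exact hve)
        · exact this.2
      · have := hw _ hm
        simp only [closedNbh, contractEdge, Set.mem_insert_iff, mem_neighborSet] at this
        push_neg at this
        simp only [closedNbh, Set.mem_insert_iff, mem_neighborSet]
        push_neg
        rcases hvxy with rfl | rfl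
        · exact ⟨fun hh => r'.2.1 hh.symm, this.2.1⟩
        · exact ⟨fun hh => r'.2.2 hh.symm, this.2.2⟩
  · rintro rfl
    have hnone : (none : Option {u : V // u ≠ x ∧ u ≠ y}) ∉ w.support := by
      intro hm
      exact hw _ hm (by simp [closedNbh])
    obtain ⟨p', rfl⟩ : ∃ p', p = some p' := by
      cases p with
      | none => exact absurd w.start_mem_support hnone
      | some u => exact ⟨u, rfl⟩
    obtain ⟨q', rfl⟩ : ∃ q', q = some q' := by
      cases q with
      | none => exact absurd w.end_mem_support hnone
      | some u => exact ⟨u, rfl⟩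
    refine ⟨p', q', rfl, rfl, pw, ?_⟩
    intro v hv
    rcases hpw v hv with ⟨h, hm⟩ | ⟨hvxy, hm⟩
    · have := hw _ hm
      simp only [closedNbh, contractEdge, Set.mem_insert_iff, mem_neighborSet] at this
      push_neg at this
      simp only [closedNbh, Set.mem_union, Set.mem_insert_iff, mem_neighborSet]
      push_neg
      exact ⟨⟨h.1, fun ha => this.2.1 ha.symm⟩, ⟨h.2, fun ha => this.2.2 ha.symm⟩⟩
    · exact absurd hm hnone
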